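/- Every antichain in {0,1}^n (set of pairwise incomparable elements under the componentwise order) has size at most C(n, ⌊n/2⌋). -/

import Mathlib

/-- State of a Boolean network with `n` components. -/
abbrev BState (n : ℕ) := Fin n → Bool

/-- Positive arc `j → i` in the global interaction graph `G(f)`:
the discrete partial derivative `f_{ij}` is positive at some state. -/
def posArc {n : ℕ} (f : BState n → BState n) (j i : Fin n) : Prop :=
  ∃ x : BState n, f (Function.update x j true) i = true ∧
    f (Function.update x j false) i = false

/-- Negative arc `j → i` in `G(f)`:
the discrete partial derivative `f_{ij}` is negative at some state. -/
def negArc {n : ℕ} (f : BState n → BState n) (j i : Fin n) : Prop :=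
  ∃ x : BState n, f (Function.update x j true) i = false ∧
    f (Function.update x j false) i = true

/-- Unsigned arc `j → i` in the interaction graph: `f_i` depends on `x_j`. -/
def arc {n : ℕ} (f : BState n → BState n) (j i : Fin n) : Prop :=
  posArc f j i ∨ negArc f j i

/-- Arc of given sign (`true` = positive, `false` = negative). -/
def signedArc {n : ℕ} (f : BState n → BState n) (ε : Bool) (j i : Fin n) : Prop :=
  if ε then posArc f j i else negArc f j i

/-- A signed cycle of `G(f)`: vertices `vert 0 → vert 1 → ⋯ → vert len → vert 0`
(so the length is `len + 1`), pairwise distinct, each consecutive arc present in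
`G(f)` with sign `sign k`. -/
structure SignedCycle {n : ℕ} (f : BState n → BState n) where
  len : ℕ
  vert : Fin (len + 1) → Fin n
  inj : Function.Injective vert
  sign : Fin (len + 1) → Bool
  arcs : ∀ k : Fin (len + 1), signedArc f (sign k) (vert k) (vert (k + 1))

/-- Length (number of arcs) of a signed cycle. -/
def SignedCycle.length {n : ℕ} {f : BState n → BState n} (C : SignedCycle f) : ℕ :=
  C.len + 1

/-- A cycle is positive iff it has an even number of negative arcs. -/
def SignedCycle.Positive {n : ℕ} {f : BState n → BState n} (C : SignedCycle f) : Prop :=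
  Even (Finset.univ.filter (fun k => C.sign k = false)).card

/-- A cycle is negative iff it has an odd number of negative arcs. -/
def SignedCycle.Negative {n : ℕ} {f : BState n → BState n} (C : SignedCycle f) : Prop :=
  Odd (Finset.univ.filter (fun k => C.sign k = false)).card

/-- An unsigned cycle of the interaction graph. -/
structure UCycle {n : ℕ} (f : BState n → BState n) where
  len : ℕ
  vert : Fin (len + 1) → Fin n
  inj : Function.Injective vert
  arcs : ∀ k : Fin (len + 1), arc f (vert k) (vert (k + 1))

/-- One step of the asynchronous dynamics `Γ(f)`. -/
def asyncStep {n : ℕ} (f : BState n → BState n) (x y : BState n) : Prop :=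
  ∃ i : Fin n, f x i ≠ x i ∧ y = Function.update x i (f x i)

/-- There is a path of length `L` from `x` to `y` in `Γ(f)`. -/
def asyncPath {n : ℕ} (f : BState n → BState n) (x y : BState n) (L : ℕ) : Prop :=
  ∃ p : ℕ → BState n, p 0 = x ∧ p L = y ∧ ∀ k < L, asyncStep f (p k) (p (k + 1))

/-- Sperner's lemma: every antichain of `{0,1}^n` has size at most `C(n, ⌊n/2⌋)`. -/
theorem stmt8 {n : ℕ} (A : Finset (BState n))
    (h : ∀ x ∈ A, ∀ y ∈ A, x ≠ y → ¬ x ≤ y ∧ ¬ y ≤ x) :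
    A.card ≤ n.choose (n / 2) := by
  classical
  set g : BState n → Finset (Fin n) := fun x => Finset.univ.filter (fun i => x i = true)
  have hmem : ∀ x i, i ∈ g x ↔ x i = true := by
    intro x i; simp [g]
  have hg_inj : Function.Injective g := by
    intro x y hxy
    funext i
    have := Finset.ext_iff.mp hxy i
    rw [hmem, hmem] at this
    cases hx : x i <;> cases hy : y i <;> simp_all
  have hle : ∀ x y : BState n, g x ⊆ g y ↔ x ≤ y := by
    intro x y
    constructor
    · intro hs i
      rcases hx : x i with _ | _
      · simp
      · have : i ∈ g y := hs ((hmem x i).mpr hx)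
        rw [hmem] at this; simp [this]
    · intro hxy i hi
      rw [hmem] at hi ⊢
      have := hxy i
      rw [hi] at this
      exact top_le_iff.mp this
  have hanti : IsAntichain (· ⊆ ·) ((A.image g : Finset (Finset (Fin n))) : Set (Finset (Fin n))) := by
    intro a ha b hb hab hsub
    simp only [Finset.coe_image, Set.mem_image, Finset.mem_coe] at ha hb
    obtain ⟨x, hx, rfl⟩ := ha
    obtain ⟨y, hy, rfl⟩ := hb
    have hne : x ≠ y := fun e => hab (by rw [e])
    exact (h x hx y hy hne).1 ((hle x y).mp hsub)
  have := IsAntichain.sperner hanti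
  rwa [Finset.card_image_of_injective _ hg_inj, Fintype.card_fin] at this
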